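/- Assume in addition: there is a group homomorphism λ : G → ℤ with λ(m) ≥ 0 for all m ∈ M and, for m ∈ M, λ(m) = 0 iff m = 1; every atom of M (an element a ∈ M, a ≠ 1, that cannot be written as a product of two elements of M both different from 1) is simple; and the set of simple elements is finite. Let Y be the graph with vertex set G in which distinct x, y are adjacent iff there exists f ∈ G with x, y ∈ C_f. Then Y is a connected, locally finite Helly graph, and left multiplication by elements of G gives an action of G on Y by graph automorphisms that is free and transitive on vertices (hence geometric). -/

import Mathlib

variable {G : Type*} [Group G]

/-- The prefix relation: `x ≼ y` iff `x⁻¹ * y ∈ M`. -/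
def PrefixRel (M : Submonoid G) (x y : G) : Prop := x⁻¹ * y ∈ M

/-- The suffix relation: `x ≼ₛ y` iff `y * x⁻¹ ∈ M`. -/
def SuffixRel (M : Submonoid G) (x y : G) : Prop := y * x⁻¹ ∈ M

/-- `x` is an upper bound of `s` with respect to the relation `le`. -/
def IsUBOf (le : G → G → Prop) (s : Set G) (x : G) : Prop := ∀ y ∈ s, le y x

/-- `x` is a least upper bound (join) of `s` with respect to the relation `le`. -/
def IsLUBOf (le : G → G → Prop) (s : Set G) (x : G) : Prop :=
  IsUBOf le s x ∧ ∀ z, IsUBOf le s z → le x z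

/-- `x` is a greatest lower bound (meet) of `s` with respect to the relation `le`. -/
def IsGLBOf (le : G → G → Prop) (s : Set G) (x : G) : Prop :=
  (∀ y ∈ s, le x y) ∧ ∀ z, (∀ y ∈ s, le z y) → le z x

/-- The relation `le` makes `G` into a lattice: every pair of elements has a join and
a meet. -/
def IsLatticeRel (le : G → G → Prop) : Prop :=
  ∀ a b : G, (∃ x, IsLUBOf le {a, b} x) ∧ ∃ y, IsGLBOf le {a, b} y


/-- The cell based at `f`: the prefix-order interval `{x : f ≼ x ≼ f·Δ}`. -/
def GarsideCell (M : Submonoid G) (Δ : G) (f : G) : Set G :=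
  {x : G | PrefixRel M f x ∧ PrefixRel M x (f * Δ)}

/-- An element is simple if it lies in `M` and is a prefix of `Δ`. -/
def IsSimple (M : Submonoid G) (Δ : G) (a : G) : Prop := a ∈ M ∧ PrefixRel M a Δ

/-- An atom of `M`: a non-identity element that cannot be written as a product of two
non-identity elements of `M`. -/
def IsAtom' (M : Submonoid G) (a : G) : Prop :=
  a ∈ M ∧ a ≠ 1 ∧ ∀ x ∈ M, ∀ y ∈ M, a = x * y → x = 1 ∨ y = 1

/-- The combinatorial ball of radius `r` about `v` in the graph `Y`. -/
def graphBall {V : Type*} (Y : SimpleGraph V) (v : V) (r : ℕ) : Set V :=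
  {u : V | Y.dist v u ≤ r}

/-- A graph is Helly if every family of pairwise intersecting combinatorial balls has a
common vertex. -/
def IsHellyGraph {V : Type*} (Y : SimpleGraph V) : Prop :=
  ∀ S : Set (V × ℕ),
    (∀ p ∈ S, ∀ q ∈ S, (graphBall Y p.1 p.2 ∩ graphBall Y q.1 q.2).Nonempty) →
    (⋂ p ∈ S, graphBall Y p.1 p.2).Nonempty

namespace Gar

variable (M : Submonoid G)

lemma pre_refl (x : G) : PrefixRel M x x := by
  show x⁻¹ * x ∈ M; rw [inv_mul_cancel]; exact one_mem M

lemma pre_trans {x y z : G} (h1 : PrefixRel M x y) (h2 : PrefixRel M y z) :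
    PrefixRel M x z := by
  have := mul_mem h1 h2
  rwa [show x⁻¹ * y * (y⁻¹ * z) = x⁻¹ * z by group] at this

lemma pre_mul_left (g : G) {x y : G} : PrefixRel M (g * x) (g * y) ↔ PrefixRel M x y := by
  unfold PrefixRel
  rw [show (g * x)⁻¹ * (g * y) = x⁻¹ * y by group]

lemma suf_mul_right (g : G) {x y : G} : SuffixRel M (x * g) (y * g) ↔ SuffixRel M x y := by
  unfold SuffixRel
  rw [show (y * g) * (x * g)⁻¹ = y * x⁻¹ by group]

variable {M} (hM : ∀ x : G, x ∈ M → x⁻¹ ∈ M → x = 1)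
include hM in

lemma pre_antisymm {x y : G} (h1 : PrefixRel M x y) (h2 : PrefixRel M y x) : x = y := by
  have := hM _ h1 (by rwa [show (x⁻¹ * y)⁻¹ = y⁻¹ * x by group])
  have : x * (x⁻¹ * y) = x * 1 := by rw [this]
  simpa [mul_assoc] using this.symm

variable {Δ : G} (hconj : ∀ x : G, x ∈ M ↔ Δ * x * Δ⁻¹ ∈ M)
include hconj

lemma conj_mem {x : G} (h : x ∈ M) : Δ * x * Δ⁻¹ ∈ M := (hconj x).1 h

lemma conj_mem' {x : G} (h : x ∈ M) : Δ⁻¹ * x * Δ ∈ M := by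
  refine (hconj _).2 ?_
  rwa [show Δ * (Δ⁻¹ * x * Δ) * Δ⁻¹ = x by group]

lemma conj_pow (k : ℕ) {x : G} (h : x ∈ M) : Δ ^ k * x * (Δ ^ k)⁻¹ ∈ M := by
  induction k with
  | zero => simpa using h
  | succ k ih =>
      have := conj_mem hconj ih
      rwa [show Δ * (Δ ^ k * x * (Δ ^ k)⁻¹) * Δ⁻¹ = Δ ^ (k+1) * x * (Δ ^ (k+1))⁻¹ by
        rw [pow_succ']; group] at this

lemma conj_pow' (k : ℕ) {x : G} (h : x ∈ M) : (Δ ^ k)⁻¹ * x * Δ ^ k ∈ M := by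
  induction k with
  | zero => simpa using h
  | succ k ih =>
      have := conj_mem' hconj ih
      rwa [show Δ⁻¹ * ((Δ ^ k)⁻¹ * x * Δ ^ k) * Δ = (Δ ^ (k+1))⁻¹ * x * Δ ^ (k+1) by
        rw [pow_succ']; group] at this


variable (hΔ : Δ ∈ M)

/-- The interval `[Δ^{-r}, Δ^r]` around the identity. -/
def Iball (M : Submonoid G) (Δ : G) (r : ℕ) : Set G :=
  {g | Δ ^ r * g ∈ M ∧ g⁻¹ * Δ ^ r ∈ M}

omit hconj in
include hM in
lemma Iball_zero {g : G} (h : g ∈ Iball M Δ 0) : g = 1 := by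
  obtain ⟨h1, h2⟩ := h
  simp only [pow_zero, one_mul, mul_one] at h1 h2
  have := hM _ h2 (by simpa using h1)
  simpa using congrArg (·⁻¹) this

omit hconj in
include hΔ in
lemma one_mem_Iball (r : ℕ) : (1 : G) ∈ Iball M Δ r := by
  constructor <;> simp [pow_mem hΔ]

lemma Iball_mul {g h : G} {a b : ℕ} (hg : g ∈ Iball M Δ a) (hh : h ∈ Iball M Δ b) :
    g * h ∈ Iball M Δ (a + b) := by
  constructor
  · have m1 : Δ ^ b * (Δ ^ a * g) * (Δ ^ b)⁻¹ ∈ M := conj_pow hconj b hg.1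
    have := mul_mem m1 hh.1
    rwa [show Δ ^ b * (Δ ^ a * g) * (Δ ^ b)⁻¹ * (Δ ^ b * h) = Δ ^ (a + b) * (g * h) by
      rw [pow_add]; group] at this
  · have m2 : (Δ ^ b)⁻¹ * (g⁻¹ * Δ ^ a) * Δ ^ b ∈ M := conj_pow' hconj b hg.2
    have := mul_mem hh.2 m2
    rwa [show h⁻¹ * Δ ^ b * ((Δ ^ b)⁻¹ * (g⁻¹ * Δ ^ a) * Δ ^ b) = (g * h)⁻¹ * Δ ^ (a + b) by
      rw [pow_add]; group] at this

omit hconj in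
include hΔ in
lemma Iball_mono {a b : ℕ} (hab : a ≤ b) : Iball M Δ a ⊆ Iball M Δ b := by
  obtain ⟨c, rfl⟩ := Nat.exists_eq_add_of_le hab
  intro g hg
  constructor
  · have := mul_mem (pow_mem hΔ c) hg.1
    rwa [show Δ ^ c * (Δ ^ a * g) = Δ ^ (a + c) * g by rw [pow_add]; group] at this
  · have := mul_mem hg.2 (pow_mem hΔ c)
    rwa [show g⁻¹ * Δ ^ a * Δ ^ c = g⁻¹ * Δ ^ (a + c) by rw [pow_add]; group] at this

lemma simple_inv_mul {a b : G} (ha : IsSimple M Δ a) (hb : IsSimple M Δ b) :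
    a⁻¹ * b ∈ Iball M Δ 1 := by
  obtain ⟨haM, haD⟩ := ha
  obtain ⟨hbM, hbD⟩ := hb
  constructor
  · have m1 : Δ * (a⁻¹ * Δ) * Δ⁻¹ ∈ M := conj_mem hconj haD
    have := mul_mem m1 hbM
    rwa [show Δ * (a⁻¹ * Δ) * Δ⁻¹ * b = Δ ^ 1 * (a⁻¹ * b) by rw [pow_one]; group] at this
  · have m2 : Δ⁻¹ * a * Δ ∈ M := conj_mem' hconj haM
    have := mul_mem hbD m2
    rwa [show b⁻¹ * Δ * (Δ⁻¹ * a * Δ) = (a⁻¹ * b)⁻¹ * Δ ^ 1 by rw [pow_one]; group] at this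

lemma cell_pair_mem {x y f : G} (hx : x ∈ GarsideCell M Δ f) (hy : y ∈ GarsideCell M Δ f) :
    x⁻¹ * y ∈ Iball M Δ 1 := by
  have ha : IsSimple M Δ (f⁻¹ * x) := by
    refine ⟨hx.1, ?_⟩
    show (f⁻¹ * x)⁻¹ * Δ ∈ M
    have : x⁻¹ * (f * Δ) ∈ M := hx.2
    rwa [show x⁻¹ * (f * Δ) = (f⁻¹ * x)⁻¹ * Δ by group] at this
  have hb : IsSimple M Δ (f⁻¹ * y) := by
    refine ⟨hy.1, ?_⟩
    show (f⁻¹ * y)⁻¹ * Δ ∈ M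
    have : y⁻¹ * (f * Δ) ∈ M := hy.2
    rwa [show y⁻¹ * (f * Δ) = (f⁻¹ * y)⁻¹ * Δ by group] at this
  have := simple_inv_mul hconj ha hb
  rwa [show (f⁻¹ * x)⁻¹ * (f⁻¹ * y) = x⁻¹ * y by group] at this

include hΔ in
lemma exists_cell_pair (hlp : IsLatticeRel (PrefixRel M))
    {g : G} (hg : g ∈ Iball M Δ 1) (x : G) :
    ∃ f, x ∈ GarsideCell M Δ f ∧ x * g ∈ GarsideCell M Δ f := by
  obtain ⟨hg1, hg2⟩ := hg
  rw [pow_one] at hg1 hg2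
  obtain ⟨j, hj⟩ := (hlp (x * Δ⁻¹) (x * g * Δ⁻¹)).1
  have ub_x : IsUBOf (PrefixRel M) {x * Δ⁻¹, x * g * Δ⁻¹} x := by
    rintro y (rfl | rfl)
    · show (x * Δ⁻¹)⁻¹ * x ∈ M
      rw [show (x * Δ⁻¹)⁻¹ * x = Δ by group]; exact hΔ
    · show (x * g * Δ⁻¹)⁻¹ * x ∈ M
      have := conj_mem hconj hg2
      rwa [show Δ * (g⁻¹ * Δ) * Δ⁻¹ = (x * g * Δ⁻¹)⁻¹ * x by group] at this
  have ub_y : IsUBOf (PrefixRel M) {x * Δ⁻¹, x * g * Δ⁻¹} (x * g) := by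
    rintro y (rfl | rfl)
    · show (x * Δ⁻¹)⁻¹ * (x * g) ∈ M
      rwa [show (x * Δ⁻¹)⁻¹ * (x * g) = Δ * g by group]
    · show (x * g * Δ⁻¹)⁻¹ * (x * g) ∈ M
      rw [show (x * g * Δ⁻¹)⁻¹ * (x * g) = Δ by group]; exact hΔ
  have hjx : PrefixRel M j x := hj.2 x ub_x
  have hjy : PrefixRel M j (x * g) := hj.2 (x * g) ub_y
  have h1 : PrefixRel M (x * Δ⁻¹) j := hj.1 _ (by left; rfl)
  have h2 : PrefixRel M (x * g * Δ⁻¹) j := hj.1 _ (by right; rfl)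
  refine ⟨j, ⟨hjx, ?_⟩, ⟨hjy, ?_⟩⟩
  · show x⁻¹ * (j * Δ) ∈ M
    have := conj_mem' hconj h1
    rwa [show Δ⁻¹ * ((x * Δ⁻¹)⁻¹ * j) * Δ = x⁻¹ * (j * Δ) by group] at this
  · show (x * g)⁻¹ * (j * Δ) ∈ M
    have := conj_mem' hconj h2
    rwa [show Δ⁻¹ * ((x * g * Δ⁻¹)⁻¹ * j) * Δ = (x * g)⁻¹ * (j * Δ) by group] at this

omit hconj hΔ in
lemma suf_trans {x y z : G} (h1 : SuffixRel M x y) (h2 : SuffixRel M y z) :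
    SuffixRel M x z := by
  have := mul_mem h2 h1
  rwa [show z * y⁻¹ * (y * x⁻¹) = z * x⁻¹ by group] at this

omit hΔ in
lemma exists_pow_prefix
    (lam : G →* Multiplicative ℤ)
    (hlam_nonneg : ∀ m ∈ M, 0 ≤ (lam m).toAdd)
    (hlam_zero : ∀ m ∈ M, ((lam m).toAdd = 0 ↔ m = 1))
    (hatoms : ∀ a : G, IsAtom' M a → IsSimple M Δ a) :
    ∀ m ∈ M, ∃ k : ℕ, m⁻¹ * Δ ^ k ∈ M := by
  suffices H : ∀ n : ℕ, ∀ m ∈ M, ((lam m).toAdd).toNat = n → ∃ k : ℕ, m⁻¹ * Δ ^ k ∈ M by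
    intro m hm; exact H _ m hm rfl
  intro n
  induction n using Nat.strong_induction_on with
  | _ n ih =>
  intro m hm hn
  by_cases h1 : m = 1
  · exact ⟨0, by simp [h1, one_mem M]⟩
  by_cases h2 : IsAtom' M m
  · exact ⟨1, by rw [pow_one]; exact (hatoms m h2).2⟩
  · unfold IsAtom' at h2
    push_neg at h2
    obtain ⟨x, hx, y, hy, hxy, hx1, hy1⟩ := h2 hm h1
    have hlx : (0:ℤ) < (lam x).toAdd :=
      lt_of_le_of_ne (hlam_nonneg x hx) (fun h => hx1 ((hlam_zero x hx).1 h.symm))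
    have hly : (0:ℤ) < (lam y).toAdd :=
      lt_of_le_of_ne (hlam_nonneg y hy) (fun h => hy1 ((hlam_zero y hy).1 h.symm))
    have hsum : (lam m).toAdd = (lam x).toAdd + (lam y).toAdd := by
      rw [hxy, map_mul]; rfl
    have hxn : ((lam x).toAdd).toNat < n := by
      rw [← hn]
      rw [Int.toNat_lt_toNat (by omega)]
      omega
    have hyn : ((lam y).toAdd).toNat < n := by
      rw [← hn]
      rw [Int.toNat_lt_toNat (by omega)]
      omega
    obtain ⟨kx, hkx⟩ := ih _ hxn x hx rfl
    obtain ⟨ky, hky⟩ := ih _ hyn y hy rfl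
    refine ⟨kx + ky, ?_⟩
    have m2 : (Δ ^ ky)⁻¹ * (x⁻¹ * Δ ^ kx) * Δ ^ ky ∈ M := conj_pow' hconj ky hkx
    have := mul_mem hky m2
    rwa [show y⁻¹ * Δ ^ ky * ((Δ ^ ky)⁻¹ * (x⁻¹ * Δ ^ kx) * Δ ^ ky) = m⁻¹ * Δ ^ (kx + ky) by
      rw [pow_add, hxy]; group] at this

include hΔ in
lemma factor_step (hls : IsLatticeRel (SuffixRel M)) {m : G} (hm : m ∈ M) {k : ℕ}
    (h : m⁻¹ * Δ ^ (k + 1) ∈ M) :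
    ∃ p s : G, p ∈ M ∧ IsSimple M Δ s ∧ m = p * s ∧ p⁻¹ * Δ ^ k ∈ M := by
  set n := m⁻¹ * Δ ^ (k + 1) with hn
  obtain ⟨r, hr⟩ := (hls m Δ).2
  have hrm : SuffixRel M r m := hr.1 m (by left; rfl)
  have hrD : SuffixRel M r Δ := hr.1 Δ (by right; rfl)
  have hrM : r ∈ M := by
    have h1 : SuffixRel M 1 r := hr.2 1 (by rintro y (rfl | rfl) <;> simp [SuffixRel, hm, hΔ])
    simpa [SuffixRel] using h1
  have hsimple : IsSimple M Δ r := by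
    refine ⟨hrM, ?_⟩
    have := conj_mem' hconj hrD
    rwa [show Δ⁻¹ * (Δ * r⁻¹) * Δ = r⁻¹ * Δ by group] at this
  obtain ⟨t, ht⟩ := (hls Δ n).1
  have hmn : m * n = Δ ^ (k + 1) := by rw [hn]; group
  have htmn : SuffixRel M t (m * n) := by
    refine ht.2 (m * n) ?_
    rintro w hw
    rcases hw with hw | hw <;> rw [hw]
    · show m * n * Δ⁻¹ ∈ M
      rw [hmn, show Δ ^ (k+1) * Δ⁻¹ = Δ ^ k by rw [pow_succ]; group]
      exact pow_mem hΔ k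
    · show m * n * n⁻¹ ∈ M
      rwa [mul_inv_cancel_right]
  have htDn : SuffixRel M t (Δ * n) := by
    refine ht.2 (Δ * n) ?_
    rintro w hw
    rcases hw with hw | hw <;> rw [hw]
    · show Δ * n * Δ⁻¹ ∈ M
      exact conj_mem hconj h
    · show Δ * n * n⁻¹ ∈ M
      rwa [mul_inv_cancel_right]
  have hlb : SuffixRel M (t * n⁻¹) r := by
    refine hr.2 (t * n⁻¹) ?_
    rintro w hw
    rcases hw with hw | hw <;> rw [hw]
    · show m * (t * n⁻¹)⁻¹ ∈ M
      have : m * n * t⁻¹ ∈ M := htmn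
      rwa [show m * n * t⁻¹ = m * (t * n⁻¹)⁻¹ by group] at this
    · show Δ * (t * n⁻¹)⁻¹ ∈ M
      have : Δ * n * t⁻¹ ∈ M := htDn
      rwa [show Δ * n * t⁻¹ = Δ * (t * n⁻¹)⁻¹ by group] at this
  have hDt : SuffixRel M Δ t := ht.1 Δ (by left; rfl)
  have htrn : SuffixRel M t (r * n) := by
    have : r * (t * n⁻¹)⁻¹ ∈ M := hlb
    rwa [show r * (t * n⁻¹)⁻¹ = r * n * t⁻¹ by group] at this
  have hDrn : SuffixRel M Δ (r * n) := suf_trans hDt htrn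
  refine ⟨m * r⁻¹, r, hrm, hsimple, by group, ?_⟩
  have : r * n * Δ⁻¹ ∈ M := hDrn
  rwa [show r * n * Δ⁻¹ = (m * r⁻¹)⁻¹ * Δ ^ k by rw [hn]; rw [show Δ ^ (k+1) = Δ ^ k * Δ by rw [pow_succ]]; group] at this

include hM hΔ in
lemma T_finite (hls : IsLatticeRel (SuffixRel M)) (hfin : {a : G | IsSimple M Δ a}.Finite) :
    ∀ k : ℕ, {m : G | m ∈ M ∧ m⁻¹ * Δ ^ k ∈ M}.Finite := by
  intro k
  induction k with
  | zero =>
      refine (Set.finite_singleton (1 : G)).subset ?_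
      rintro m ⟨h1, h2⟩
      simp only [pow_zero, mul_one] at h2
      have := hM m h1 h2
      simp [this]
  | succ k ih =>
      refine ((ih.prod hfin).image (fun q : G × G => q.1 * q.2)).subset ?_
      rintro m ⟨h1, h2⟩
      obtain ⟨p, s, hp, hs, rfl, hpk⟩ := factor_step hconj hΔ hls h1 h2
      exact ⟨(p, s), ⟨⟨hp, hpk⟩, hs⟩, rfl⟩

include hM hΔ in
lemma Iball_finite (hls : IsLatticeRel (SuffixRel M)) (hfin : {a : G | IsSimple M Δ a}.Finite)
    (r : ℕ) : (Iball M Δ r).Finite := by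
  refine ((T_finite hM hconj hΔ hls hfin (r + r)).image (fun m => (Δ ^ r)⁻¹ * m)).subset ?_
  rintro g ⟨h1, h2⟩
  refine ⟨Δ ^ r * g, ⟨h1, ?_⟩, by group⟩
  rwa [show (Δ ^ r * g)⁻¹ * Δ ^ (r + r) = g⁻¹ * Δ ^ r by rw [pow_add]; group]

section Graph

variable (Y : SimpleGraph G)
  (hY : ∀ x y : G, Y.Adj x y ↔
      x ≠ y ∧ ∃ f : G, x ∈ GarsideCell M Δ f ∧ y ∈ GarsideCell M Δ f)

include hY

omit hΔ in
lemma adj_iff (hlp : IsLatticeRel (PrefixRel M)) (hΔ : Δ ∈ M) (x y : G) :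
    Y.Adj x y ↔ x ≠ y ∧ x⁻¹ * y ∈ Iball M Δ 1 := by
  rw [hY]
  constructor
  · rintro ⟨hne, f, hx, hyf⟩
    exact ⟨hne, cell_pair_mem hconj hx hyf⟩
  · rintro ⟨hne, hg⟩
    obtain ⟨f, hx, hxg⟩ := exists_cell_pair hconj hΔ hlp hg x
    refine ⟨hne, f, hx, ?_⟩
    rwa [show x * (x⁻¹ * y) = y by group] at hxg

omit hΔ in
lemma walk_mem_Iball (hlp : IsLatticeRel (PrefixRel M)) (hΔ : Δ ∈ M) {x y : G}
    (w : Y.Walk x y) : x⁻¹ * y ∈ Iball M Δ w.length := by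
  induction w with
  | nil =>
      have := one_mem_Iball (M := M) hΔ 0
      simpa using this
  | @cons x z y h p ih =>
      have h1 : x⁻¹ * z ∈ Iball M Δ 1 := ((adj_iff hconj Y hY hlp hΔ x z).1 h).2
      have := Iball_mul hconj h1 ih
      rw [show x⁻¹ * z * (z⁻¹ * y) = x⁻¹ * y by group] at this
      rwa [SimpleGraph.Walk.length_cons, Nat.add_comm]

include hΔ in
lemma exists_walk (hM : ∀ x : G, x ∈ M → x⁻¹ ∈ M → x = 1)
    (hlp : IsLatticeRel (PrefixRel M)) (hls : IsLatticeRel (SuffixRel M)) :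
    ∀ (r : ℕ) (g : G), g ∈ Iball M Δ r → ∀ x : G, ∃ w : Y.Walk x (x * g), w.length ≤ r := by
  intro r
  induction r with
  | zero =>
      intro g hg x
      have := Iball_zero hM hg
      subst this
      exact ⟨SimpleGraph.Walk.nil.copy rfl (by group), by simp⟩
  | succ r ih =>
      intro g hg x
      have hmM : Δ ^ (r + 1) * g ∈ M := hg.1
      have hm2 : (Δ ^ (r + 1) * g)⁻¹ * Δ ^ ((2 * r + 1) + 1) ∈ M := by
        have := hg.2
        rwa [show g⁻¹ * Δ ^ (r+1) = (Δ ^ (r+1) * g)⁻¹ * Δ ^ ((2*r+1)+1) by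
          rw [show (2*r+1)+1 = (r+1)+(r+1) by ring, pow_add]; group] at this
      obtain ⟨p1, t, hp1, ht, heq1, hp1k⟩ := factor_step hconj hΔ hls hmM hm2
      have hp1k' : p1⁻¹ * Δ ^ (2 * r + 1) ∈ M := hp1k
      rw [show 2*r+1 = (2*r)+1 by rfl] at hp1k'
      obtain ⟨p, s, hp, hs, heq2, hpk⟩ := factor_step hconj hΔ hls hp1 hp1k'
      set g' : G := (Δ ^ (r + 1))⁻¹ * p * Δ with hg'
      have hg'I : g' ∈ Iball M Δ r := by
        constructor
        · have := conj_mem' hconj hp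
          rwa [show Δ⁻¹ * p * Δ = Δ ^ r * g' by rw [hg', pow_succ]; group] at this
        · have := conj_mem' hconj hpk
          rwa [show Δ⁻¹ * (p⁻¹ * Δ ^ (2*r)) * Δ = g'⁻¹ * Δ ^ r by
            rw [hg', show (2*r : ℕ) = r + r by ring, pow_add, pow_succ]; group] at this
      set h : G := Δ⁻¹ * s * t with hh
      have hgg : g = g' * h := by
        rw [hg', hh]
        have : g = (Δ ^ (r+1))⁻¹ * (p * s * t) := by
          rw [← heq2, ← heq1]; group
        rw [this]; group
      have hhI : h ∈ Iball M Δ 1 := by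
        constructor
        · have := mul_mem hs.1 ht.1
          rwa [show s * t = Δ ^ 1 * h by rw [hh, pow_one]; group] at this
        · have h1 : Δ⁻¹ * (s⁻¹ * Δ) * Δ ∈ M := conj_mem' hconj hs.2
          have := mul_mem ht.2 h1
          rwa [show t⁻¹ * Δ * (Δ⁻¹ * (s⁻¹ * Δ) * Δ) = h⁻¹ * Δ ^ 1 by rw [hh, pow_one]; group]
            at this
      obtain ⟨w, hw⟩ := ih g' hg'I x
      by_cases hone : h = 1
      · refine ⟨w.copy rfl (by rw [hgg, hone, mul_one]), ?_⟩
        rw [SimpleGraph.Walk.length_copy]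
        omega
      · have hadj : Y.Adj (x * g') (x * g) := by
          rw [adj_iff hconj Y hY hlp hΔ]
          constructor
          · intro hcon
            apply hone
            have h1 : g' = g := mul_left_cancel hcon
            have h2 : g' * 1 = g' * h := by rw [mul_one, ← hgg, h1]
            exact (mul_left_cancel h2).symm
          · rwa [show (x * g')⁻¹ * (x * g) = g'⁻¹ * g by group, show g'⁻¹ * g = h by rw [hgg]; group]
        refine ⟨w.concat hadj, ?_⟩
        rw [SimpleGraph.Walk.length_concat]
        omega

end Graph

include hΔ in
lemma exists_Iball (hlp : IsLatticeRel (PrefixRel M))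
    (lam : G →* Multiplicative ℤ)
    (hlam_nonneg : ∀ m ∈ M, 0 ≤ (lam m).toAdd)
    (hlam_zero : ∀ m ∈ M, ((lam m).toAdd = 0 ↔ m = 1))
    (hatoms : ∀ a : G, IsAtom' M a → IsSimple M Δ a)
    (g : G) : ∃ r : ℕ, g ∈ Iball M Δ r := by
  obtain ⟨d, hd⟩ := (hlp 1 g).2
  have hm1 : d⁻¹ ∈ M := by
    have : d⁻¹ * 1 ∈ M := hd.1 1 (by left; rfl)
    simpa using this
  have hm2 : d⁻¹ * g ∈ M := hd.1 g (by right; rfl)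
  obtain ⟨a, ha⟩ := exists_pow_prefix hconj lam hlam_nonneg hlam_zero hatoms d⁻¹ hm1
  obtain ⟨b, hb⟩ := exists_pow_prefix hconj lam hlam_nonneg hlam_zero hatoms (d⁻¹ * g) hm2
  refine ⟨a + b, ?_, ?_⟩
  · have c1 : Δ ^ a * d ∈ M := by
      have := conj_pow hconj a ha
      rwa [show Δ ^ a * (d⁻¹⁻¹ * Δ ^ a) * (Δ ^ a)⁻¹ = Δ ^ a * d by group] at this
    have := mul_mem (mul_mem (pow_mem hΔ b) c1) hm2
    rwa [show Δ ^ b * (Δ ^ a * d) * (d⁻¹ * g) = Δ ^ (a + b) * g by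
      rw [pow_add]; group] at this
  · have c2 : (Δ ^ b)⁻¹ * d⁻¹ * Δ ^ b ∈ M := conj_pow' hconj b hm1
    have := mul_mem (mul_mem hb c2) (pow_mem hΔ a)
    rwa [show (d⁻¹ * g)⁻¹ * Δ ^ b * ((Δ ^ b)⁻¹ * d⁻¹ * Δ ^ b) * Δ ^ a = g⁻¹ * Δ ^ (a + b) by
      rw [pow_add]; group] at this

omit hconj hΔ in
lemma finset_lub (hlp : IsLatticeRel (PrefixRel M)) :
    ∀ F : Finset G, F.Nonempty →
      ∃ x, (∀ a ∈ F, PrefixRel M a x) ∧ ∀ z, (∀ a ∈ F, PrefixRel M a z) → PrefixRel M x z := by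
  intro F
  induction F using Finset.cons_induction with
  | empty => intro h; exact absurd h (by simp)
  | cons a F ha ih =>
      intro _
      rcases F.eq_empty_or_nonempty with rfl | hF
      · refine ⟨a, ?_, fun z hz => hz a (by simp)⟩
        intro b hb
        have : b = a := by simpa using hb
        rw [this]; exact pre_refl M a
      · obtain ⟨x', hub, hmin⟩ := ih hF
        obtain ⟨x, hx⟩ := (hlp a x').1
        refine ⟨x, ?_, ?_⟩
        · intro b hb
          rcases Finset.mem_cons.1 hb with hb | hb
          · rw [hb]; exact hx.1 a (by left; rfl)
          · exact pre_trans M (hub b hb) (hx.1 x' (by right; rfl))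
        · intro z hz
          refine hx.2 z ?_
          rintro w hw
          rcases hw with hw | hw <;> rw [hw]
          · exact hz a (Finset.mem_cons_self a F)
          · exact hmin z (fun b hb => hz b (Finset.mem_cons_of_mem hb))

end Gar

/-- **Garside groups of finite type are Helly.** Under the Garside-type hypotheses
(a length homomorphism `λ : G → ℤ` positive on `M` and vanishing only at `1`; all atoms
simple; finitely many simple elements), the graph `Y` on `G` in which distinct vertices
are adjacent iff they lie in a common cell is a connected, locally finite Helly graph; and
left multiplication preserves adjacency (so `G` acts on `Y` by graph automorphisms), this
action being free and transitive on vertices. -/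
theorem garside_group_acts_on_helly_graph (M : Submonoid G)
    (hM : ∀ x : G, x ∈ M → x⁻¹ ∈ M → x = 1)
    (hlp : IsLatticeRel (PrefixRel M)) (hls : IsLatticeRel (SuffixRel M))
    (Δ : G) (hΔ : Δ ∈ M) (hconj : ∀ x : G, x ∈ M ↔ Δ * x * Δ⁻¹ ∈ M)
    (lam : G →* Multiplicative ℤ)
    (hlam_nonneg : ∀ m ∈ M, 0 ≤ (lam m).toAdd)
    (hlam_zero : ∀ m ∈ M, ((lam m).toAdd = 0 ↔ m = 1))
    (hatoms : ∀ a : G, IsAtom' M a → IsSimple M Δ a)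
    (hfin : {a : G | IsSimple M Δ a}.Finite)
    (Y : SimpleGraph G)
    (hY : ∀ x y : G, Y.Adj x y ↔
      x ≠ y ∧ ∃ f : G, x ∈ GarsideCell M Δ f ∧ y ∈ GarsideCell M Δ f) :
    Y.Connected ∧
    (∀ v : G, (Y.neighborSet v).Finite) ∧
    IsHellyGraph Y ∧
    (∀ g x y : G, Y.Adj x y ↔ Y.Adj (g * x) (g * y)) ∧
    (∀ x y : G, ∃! g : G, g * x = y) := by

  classical
  have adj_iff : ∀ x y : G, Y.Adj x y ↔ x ≠ y ∧ x⁻¹ * y ∈ Gar.Iball M Δ 1 :=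
    Gar.adj_iff hconj Y hY hlp hΔ
  have hwalk : ∀ (r : ℕ) (g : G), g ∈ Gar.Iball M Δ r →
      ∀ x : G, ∃ w : Y.Walk x (x * g), w.length ≤ r :=
    Gar.exists_walk hconj hΔ Y hY hM hlp hls
  have hIball : ∀ g : G, ∃ r : ℕ, g ∈ Gar.Iball M Δ r :=
    Gar.exists_Iball hconj hΔ hlp lam hlam_nonneg hlam_zero hatoms
  have hreach : ∀ x y : G, Y.Reachable x y := by
    intro x y
    obtain ⟨r, hr⟩ := hIball (x⁻¹ * y)
    obtain ⟨w, -⟩ := hwalk r _ hr x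
    exact ⟨w.copy rfl (by group)⟩
  have hconn : Y.Connected := by
    rw [SimpleGraph.connected_iff]
    exact ⟨hreach, ⟨1⟩⟩
  have hball : ∀ (v : G) (r : ℕ) (u : G),
      u ∈ graphBall Y v r ↔ v⁻¹ * u ∈ Gar.Iball M Δ r := by
    intro v r u
    constructor
    · intro hu
      have hu' : Y.dist v u ≤ r := hu
      obtain ⟨w, hw⟩ := (hreach v u).exists_walk_length_eq_dist
      have hm := Gar.walk_mem_Iball hconj Y hY hlp hΔ w
      exact Gar.Iball_mono hΔ (by omega) hm
    · intro hu
      obtain ⟨w, hw⟩ := hwalk r _ hu v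
      have : Y.dist v (v * (v⁻¹ * u)) ≤ r := le_trans (SimpleGraph.dist_le w) hw
      show Y.dist v u ≤ r
      simpa [mul_inv_cancel_left] using this
  refine ⟨hconn, ?_, ?_, ?_, ?_⟩
  · -- local finiteness
    intro v
    have hfinI : (Gar.Iball M Δ 1).Finite := Gar.Iball_finite hM hconj hΔ hls hfin 1
    refine (hfinI.image (fun g => v * g)).subset ?_
    intro u hu
    exact ⟨v⁻¹ * u, ((adj_iff v u).1 hu).2, by group⟩
  · -- Helly
    intro S hS
    rcases Set.eq_empty_or_nonempty S with rfl | ⟨p₀, hp₀⟩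
    · exact ⟨1, by simp⟩
    have finHelly : ∀ F : Finset (G × ℕ), F.Nonempty → (↑F ⊆ S) →
        ∃ x, ∀ p ∈ F, x ∈ graphBall Y p.1 p.2 := by
      intro F hFne hFS
      obtain ⟨x, hub, hmin⟩ := Gar.finset_lub hlp
        (F.image (fun p : G × ℕ => p.1 * (Δ ^ p.2)⁻¹)) (hFne.image _)
      refine ⟨x, ?_⟩
      intro p hp
      rw [hball]
      constructor
      · have h1 : (p.1 * (Δ ^ p.2)⁻¹)⁻¹ * x ∈ M :=
          hub _ (Finset.mem_image_of_mem _ hp)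
        rwa [show (p.1 * (Δ ^ p.2)⁻¹)⁻¹ * x = Δ ^ p.2 * (p.1⁻¹ * x) by group] at h1
      · have h2 : PrefixRel M x (p.1 * Δ ^ p.2) := by
          apply hmin
          intro aa haa
          obtain ⟨q, hq, rfl⟩ := Finset.mem_image.1 haa
          obtain ⟨w, hwq, hwp⟩ := hS q (hFS hq) p (hFS hp)
          rw [hball] at hwq hwp
          refine Gar.pre_trans M (show PrefixRel M (q.1 * (Δ ^ q.2)⁻¹) w from ?_)
            (show PrefixRel M w (p.1 * Δ ^ p.2) from ?_)
          · show (q.1 * (Δ ^ q.2)⁻¹)⁻¹ * w ∈ M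
            have := hwq.1
            rwa [show (q.1 * (Δ ^ q.2)⁻¹)⁻¹ * w = Δ ^ q.2 * (q.1⁻¹ * w) by group]
          · show w⁻¹ * (p.1 * Δ ^ p.2) ∈ M
            have := hwp.2
            rwa [show (p.1⁻¹ * w)⁻¹ * Δ ^ p.2 = w⁻¹ * (p.1 * Δ ^ p.2) by group] at this
        have h3 : x⁻¹ * (p.1 * Δ ^ p.2) ∈ M := h2
        rwa [show x⁻¹ * (p.1 * Δ ^ p.2) = (p.1⁻¹ * x)⁻¹ * Δ ^ p.2 by group] at h3
    have hKfin : (graphBall Y p₀.1 p₀.2).Finite := by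
      refine ((Gar.Iball_finite hM hconj hΔ hls hfin p₀.2).image
        (fun g => p₀.1 * g)).subset ?_
      intro u hu
      exact ⟨p₀.1⁻¹ * u, (hball _ _ _).1 hu, by group⟩
    set φ : G × ℕ → Set G := fun p => graphBall Y p₀.1 p₀.2 ∩ graphBall Y p.1 p.2 with hφ
    have himg : (φ '' S).Finite :=
      hKfin.finite_subsets.subset (by rintro _ ⟨p, hp, rfl⟩; exact Set.inter_subset_left)
    have hchoice : ∀ t ∈ φ '' S, ∃ p, p ∈ S ∧ φ p = t := by
      rintro t ⟨p, hp, hpt⟩; exact ⟨p, hp, hpt⟩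
    choose! ψ hψS hψeq using hchoice
    have hFf : (insert p₀ (ψ '' (φ '' S))).Finite := (himg.image ψ).insert p₀
    obtain ⟨x, hx⟩ := finHelly hFf.toFinset
      ⟨p₀, by rw [Set.Finite.mem_toFinset]; exact Set.mem_insert _ _⟩
      (by intro p hp
          simp only [Finset.mem_coe, Set.Finite.mem_toFinset] at hp
          rcases hp with rfl | ⟨t, ht, rfl⟩
          · exact hp₀
          · exact hψS t ht)
    refine ⟨x, ?_⟩
    rw [Set.mem_iInter₂]
    intro p hp
    have hxK : x ∈ graphBall Y p₀.1 p₀.2 :=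
      hx p₀ (by rw [Set.Finite.mem_toFinset]; exact Set.mem_insert _ _)
    have hq : ψ (φ p) ∈ insert p₀ (ψ '' (φ '' S)) :=
      Set.mem_insert_of_mem _ ⟨φ p, ⟨p, hp, rfl⟩, rfl⟩
    have hxq : x ∈ graphBall Y (ψ (φ p)).1 (ψ (φ p)).2 :=
      hx _ (by rw [Set.Finite.mem_toFinset]; exact hq)
    have hmem : x ∈ φ (ψ (φ p)) := ⟨hxK, hxq⟩
    rw [hψeq (φ p) ⟨p, hp, rfl⟩] at hmem
    exact hmem.2
  · -- equivariance
    intro g x y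
    rw [adj_iff, adj_iff]
    rw [show (g * x)⁻¹ * (g * y) = x⁻¹ * y by group]
    simp only [ne_eq, mul_right_inj]
  · -- simply transitive
    intro x y
    exact ⟨y * x⁻¹, by group, fun g hg => by rw [← hg]; group⟩
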